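/- Let f satisfy Assumption 1 and u satisfy Assumption 2, and let (x^k) be the sequence generated by the RCD-IHT algorithm from x⁰ ∈ ℝⁿ. If at iteration k a change of I^k = I(x^k) in expectation occurs, i.e. E[|I^{k+1} \ I^k| + |I^k \ I^{k+1}| | x^k] > 0, then E[(μ_{i_k}/2)‖x^{k+1} − x^k‖² | x^k] ≥ δ, where δ = (1/N) · min{ min_{i : λ_i > 0} μ_i λ_i / M_i, min_{i ∈ [N], j ∈ 𝒮_i ∩ supp(x⁰)} (μ_i/2)|x⁰_{(j)}|² } > 0. -/

import Mathlib

open scoped RealInnerProductSpace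
open Finset

/-- The weighted ℓ₀ quasinorm `‖x‖_{0,λ}`. -/
noncomputable def l0norm {n N : ℕ} (blk : Fin n → Fin N) (lam : Fin N → ℝ)
    (x : EuclideanSpace ℝ (Fin n)) : ℝ :=
  ∑ j, if x j ≠ 0 then lam (blk j) else 0

/-- Membership in `I(x) = supp(x) ∪ {j ∈ 𝒮ᵢ : λᵢ = 0}`. -/
def InIset {n N : ℕ} (blk : Fin n → Fin N) (lam : Fin N → ℝ)
    (x : EuclideanSpace ℝ (Fin n)) (j : Fin n) : Prop :=
  x j ≠ 0 ∨ lam (blk j) = 0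

/-- Block restriction `xᵢ = Uᵢᵀ x`. -/
noncomputable def blkProj {n N : ℕ} (blk : Fin n → Fin N) (i : Fin N)
    (x : EuclideanSpace ℝ (Fin n)) : EuclideanSpace ℝ {j : Fin n // blk j = i} :=
  WithLp.toLp 2 (fun j => x j.1)

/-- Block embedding `Uᵢ hᵢ`. -/
noncomputable def blkEmbed {n N : ℕ} (blk : Fin n → Fin N) (i : Fin N)
    (v : EuclideanSpace ℝ {j : Fin n // blk j = i}) : EuclideanSpace ℝ (Fin n) :=
  WithLp.toLp 2 (fun j => if h : blk j = i then v ⟨j, h⟩ else 0)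

/-- Assumption 2 on the family of approximation functions `uᵢ(·;·)`, with gradients
(in the first argument) `guᵢ`, Lipschitz constants `Mᵢ > Lᵢ` and curvature constants
`μᵢ ∈ (0, Mᵢ - Lᵢ]`. -/
structure ApproxAssumption {n N : ℕ} (blk : Fin n → Fin N)
    (f : EuclideanSpace ℝ (Fin n) → ℝ)
    (g : EuclideanSpace ℝ (Fin n) → EuclideanSpace ℝ (Fin n))
    (L : Fin N → ℝ)
    (u : ∀ i : Fin N, EuclideanSpace ℝ {j : Fin n // blk j = i} →
      EuclideanSpace ℝ (Fin n) → ℝ)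
    (gu : ∀ i : Fin N, EuclideanSpace ℝ {j : Fin n // blk j = i} →
      EuclideanSpace ℝ (Fin n) → EuclideanSpace ℝ {j : Fin n // blk j = i})
    (M μ : Fin N → ℝ) : Prop where
  strictConvexOn : ∀ i x, StrictConvexOn ℝ Set.univ (fun v => u i v x)
  hasGradient : ∀ i x v, HasGradientAt (fun w => u i w x) (gu i v x) v
  continuous_second : ∀ i v, Continuous fun x => u i v x
  value_at : ∀ i x, u i (blkProj blk i x) x = f x
  gradient_at : ∀ i x, gu i (blkProj blk i x) x = blkProj blk i (g x)
  lipschitz_grad : ∀ i x v w, ‖gu i v x - gu i w x‖ ≤ M i * ‖v - w‖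
  M_gt_L : ∀ i, L i < M i
  mu_pos : ∀ i, 0 < μ i
  mu_le : ∀ i, μ i ≤ M i - L i
  lower_bound : ∀ i x v,
    f (x + blkEmbed blk i (v - blkProj blk i x)) + μ i / 2 * ‖v - blkProj blk i x‖ ^ 2
      ≤ u i v x

/-- `z` is a `u`-strong local minimizer: `F(z) ≤ min_{yᵢ} uᵢ(yᵢ;z) + ‖z + Uᵢ(yᵢ - zᵢ)‖_{0,λ}`
for all blocks `i`. -/
def IsUStrongLocalMin {n N : ℕ} (blk : Fin n → Fin N) (lam : Fin N → ℝ)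
    (f : EuclideanSpace ℝ (Fin n) → ℝ)
    (u : ∀ i : Fin N, EuclideanSpace ℝ {j : Fin n // blk j = i} →
      EuclideanSpace ℝ (Fin n) → ℝ)
    (z : EuclideanSpace ℝ (Fin n)) : Prop :=
  ∀ (i : Fin N) (y : EuclideanSpace ℝ {j : Fin n // blk j = i}),
    f z + l0norm blk lam z ≤
      u i y z + l0norm blk lam (z + blkEmbed blk i (y - blkProj blk i z))

/-- The number of nonzero entries of a block vector, `‖yᵢ‖₀`, as a real number. -/
noncomputable def blkNnz {n N : ℕ} {blk : Fin n → Fin N} {i : Fin N}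
    (v : EuclideanSpace ℝ {j : Fin n // blk j = i}) : ℝ :=
  ∑ j, if v j ≠ 0 then (1 : ℝ) else 0

/-- One iteration of the (RCD-IHT) method: block `i` of `x` is replaced by `T i x`. -/
noncomputable def rcdStep {n N : ℕ} (blk : Fin n → Fin N)
    (T : ∀ i : Fin N, EuclideanSpace ℝ (Fin n) →
      EuclideanSpace ℝ {j : Fin n // blk j = i})
    (i : Fin N) (x : EuclideanSpace ℝ (Fin n)) : EuclideanSpace ℝ (Fin n) :=
  x + blkEmbed blk i (T i x - blkProj blk i x)

/-- The index set `I(x) = supp(x) ∪ {j ∈ 𝒮ᵢ : λᵢ = 0}` as a set. -/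
def IsetOf {n N : ℕ} (blk : Fin n → Fin N) (lam : Fin N → ℝ)
    (x : EuclideanSpace ℝ (Fin n)) : Set (Fin n) :=
  {j | x j ≠ 0 ∨ lam (blk j) = 0}

noncomputable def blkNnz' {m : Type*} [Fintype m]
    (v : EuclideanSpace ℝ m) : ℝ :=
  ∑ j, if v j ≠ 0 then (1 : ℝ) else 0

lemma lemA {m : Type*} [Fintype m] [DecidableEq m] (lami Mi : ℝ) (hMi : 0 < Mi)
    (u : EuclideanSpace ℝ m → ℝ)
    (gu : EuclideanSpace ℝ m → EuclideanSpace ℝ m)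
    (hgradu : ∀ v, HasGradientAt u (gu v) v)
    (hlip : ∀ v w, ‖gu v - gu w‖ ≤ Mi * ‖v - w‖)
    (y : EuclideanSpace ℝ m)
    (hmin : ∀ z, u y + lami * blkNnz' y ≤ u z + lami * blkNnz' z)
    (j : m) (hj : y j ≠ 0) :
    lami ≤ Mi / 2 * (y j) ^ 2 := by
  set e : EuclideanSpace ℝ m := EuclideanSpace.single j (y j) with he
  set p : ℝ → EuclideanSpace ℝ m := fun t => y + t • (-e) with hp
  have hpapp : ∀ t j', p t j' = if j' = j then (1 - t) * y j else y j' := by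
    intro t j'
    simp only [hp, PiLp.add_apply, PiLp.smul_apply, PiLp.neg_apply, he,
      EuclideanSpace.single_apply, smul_eq_mul]
    split
    next h => rw [h]; ring
    next => ring
  have hp0 : p 0 = y := by simp [hp]
  have hnnz : ∀ t, t ≠ 1 → blkNnz' (p t) = blkNnz' y := by
    intro t ht
    unfold blkNnz'
    refine Finset.sum_congr rfl fun j' _ => ?_
    rw [hpapp]
    split
    next h =>
      rw [h]
      have hne : (1 - t) * y j ≠ 0 :=
        mul_ne_zero (by intro h'; apply ht; linarith [sub_eq_zero.mp h']) hj
      simp [hne, hj]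
    next => rfl
  have hnnz1 : blkNnz' (p 1) + 1 = blkNnz' y := by
    unfold blkNnz'
    rw [← Finset.sum_erase_add _ _ (Finset.mem_univ j),
        ← Finset.sum_erase_add _ _ (Finset.mem_univ j)]
    have h1 : ∑ x ∈ Finset.univ.erase j, (if p 1 x ≠ 0 then (1:ℝ) else 0)
        = ∑ x ∈ Finset.univ.erase j, (if y x ≠ 0 then (1:ℝ) else 0) := by
      refine Finset.sum_congr rfl fun j' hj' => ?_
      rw [hpapp]; rw [if_neg (Finset.mem_erase.mp hj').1]
    rw [h1, hpapp, if_pos rfl]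
    simp [hj]
  set φ : ℝ → ℝ := fun t => u (p t) with hφ
  set D : ℝ → ℝ := fun t => ⟪gu (p t), -e⟫ with hD
  have hderiv : ∀ t, HasDerivAt φ (D t) t := by
    intro t
    have hpd : HasDerivAt p (-e) t := by
      simpa [hp, smul_neg] using ((hasDerivAt_id t).smul_const (-e)).const_add y
    have := (hgradu (p t)).hasFDerivAt.comp_hasDerivAt t hpd
    exact this.congr_deriv (by simp [hD])
  have hmin' : ∀ t, t ≠ 1 → φ 0 ≤ φ t := by
    intro t ht
    have := hmin (p t)
    rw [hnnz t ht] at this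
    simp only [hφ, hp0]
    linarith
  have hloc : IsLocalMin φ 0 := by
    rw [IsLocalMin, IsMinFilter]
    rw [Metric.eventually_nhds_iff]
    exact ⟨1, one_pos, fun t hdist => hmin' t (by
      intro h; subst h; rw [Real.dist_eq] at hdist; norm_num at hdist)⟩
  have hD0 : D 0 = 0 := hloc.hasDerivAt_eq_zero (hderiv 0)
  have hDub : ∀ t : ℝ, 0 ≤ t → D t ≤ Mi * ‖e‖ ^ 2 * t := by
    intro t ht
    have h1 : D t - D 0 = ⟪gu (p t) - gu (p 0), -e⟫ := by
      simp [hD, inner_sub_left]; try ring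
    have h2 : ⟪gu (p t) - gu (p 0), -e⟫ ≤ ‖gu (p t) - gu (p 0)‖ * ‖e‖ := by
      calc ⟪gu (p t) - gu (p 0), -e⟫ ≤ ‖gu (p t) - gu (p 0)‖ * ‖-e‖ :=
            real_inner_le_norm _ _
        _ = ‖gu (p t) - gu (p 0)‖ * ‖e‖ := by rw [norm_neg]
    have h3 : ‖gu (p t) - gu (p 0)‖ ≤ Mi * ‖p t - p 0‖ := hlip _ _
    have h4 : ‖p t - p 0‖ = t * ‖e‖ := by
      have : p t - p 0 = t • (-e) := by simp [hp]
      rw [this, norm_smul, norm_neg, Real.norm_eq_abs, abs_of_nonneg ht]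
    rw [hD0] at h1
    have := h2.trans (mul_le_mul_of_nonneg_right h3 (norm_nonneg e))
    rw [h4] at this
    nlinarith [norm_nonneg e]
  set ψ : ℝ → ℝ := fun t => φ t - Mi * ‖e‖ ^ 2 * t ^ 2 / 2 with hψ
  have hderivψ : ∀ t, HasDerivAt ψ (D t - Mi * ‖e‖ ^ 2 * t) t := by
    intro t
    have h2 : HasDerivAt (fun t : ℝ => Mi * ‖e‖ ^ 2 * t ^ 2 / 2)
        (Mi * ‖e‖ ^ 2 * t) t := by
      have := ((hasDerivAt_pow 2 t).const_mul (Mi * ‖e‖ ^ 2)).div_const 2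
      exact this.congr_deriv (by rw [show (2:ℕ) - 1 = 1 from rfl]; push_cast; ring)
    exact (hderiv t).sub h2
  have hanti : AntitoneOn ψ (Set.Icc 0 1) := by
    apply antitoneOn_of_deriv_nonpos (convex_Icc 0 1)
    · exact (Continuous.continuousOn (by
        exact continuous_iff_continuousAt.mpr fun t => (hderivψ t).continuousAt))
    · intro t _; exact (hderivψ t).differentiableAt.differentiableWithinAt
    · intro t ht
      rw [interior_Icc] at ht
      rw [(hderivψ t).deriv]
      have := hDub t (le_of_lt ht.1)
      linarith
  have hψ10 : ψ 1 ≤ ψ 0 := hanti (Set.mem_Icc.mpr ⟨le_refl 0, zero_le_one⟩)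
    (Set.mem_Icc.mpr ⟨zero_le_one, le_refl 1⟩) zero_le_one
  have hkey : φ 0 + lami ≤ φ 1 := by
    have := hmin (p 1)
    rw [← hnnz1] at this
    simp only [hφ, hp0]
    linarith
  have hnorme : ‖e‖ = |y j| := by
    rw [he, EuclideanSpace.norm_single, Real.norm_eq_abs]
  have : lami ≤ Mi * ‖e‖ ^ 2 / 2 := by
    simp only [hψ] at hψ10
    nlinarith
  rw [hnorme] at this
  nlinarith [sq_abs (y j)]

/-- If at iteration `k` of (RCD-IHT) a change of `Iᵏ` in expectation
occurs, i.e. `E[|Iᵏ⁺¹ \ Iᵏ| + |Iᵏ \ Iᵏ⁺¹| | xᵏ] > 0`, then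
`E[(μ_{i_k}/2)‖xᵏ⁺¹ - xᵏ‖² | xᵏ] = (1/N) ∑ᵢ (μᵢ/2)‖T^u_i(xᵏ) - xᵏᵢ‖² ≥ δ > 0`. -/
theorem statement11 {n N : ℕ} (blk : Fin n → Fin N) (lam : Fin N → ℝ)
    (hlam : ∀ i, 0 ≤ lam i) (hlam_pos : ∃ i, 0 < lam i)
    (f : EuclideanSpace ℝ (Fin n) → ℝ)
    (g : EuclideanSpace ℝ (Fin n) → EuclideanSpace ℝ (Fin n))
    (hconv : ConvexOn ℝ Set.univ f)
    (hgrad : ∀ x, HasGradientAt f (g x) x)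
    (L : Fin N → ℝ) (hL : ∀ i, 0 < L i)
    (hLip : ∀ (i : Fin N) (x : EuclideanSpace ℝ (Fin n))
      (h : EuclideanSpace ℝ {j : Fin n // blk j = i}),
      ‖blkProj blk i (g (x + blkEmbed blk i h)) - blkProj blk i (g x)‖ ≤ L i * ‖h‖)
    (u : ∀ i : Fin N, EuclideanSpace ℝ {j : Fin n // blk j = i} →
      EuclideanSpace ℝ (Fin n) → ℝ)
    (gu : ∀ i : Fin N, EuclideanSpace ℝ {j : Fin n // blk j = i} →
      EuclideanSpace ℝ (Fin n) → EuclideanSpace ℝ {j : Fin n // blk j = i})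
    (M μ : Fin N → ℝ)
    (hu : ApproxAssumption blk f g L u gu M μ)
    (T : ∀ i : Fin N, EuclideanSpace ℝ (Fin n) →
      EuclideanSpace ℝ {j : Fin n // blk j = i})
    (hT : ∀ (i : Fin N) (x : EuclideanSpace ℝ (Fin n))
      (y : EuclideanSpace ℝ {j : Fin n // blk j = i}),
      u i (T i x) x + lam i * blkNnz (T i x) ≤ u i y x + lam i * blkNnz y)
    -- a realization of the (RCD-IHT) sequence generated from `x0`
    (x0 : EuclideanSpace ℝ (Fin n)) (idx : ℕ → Fin N)
    (xs : ℕ → EuclideanSpace ℝ (Fin n))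
    (hxs0 : xs 0 = x0)
    (hxs : ∀ k, xs (k + 1) = rcdStep blk T (idx k) (xs k))
    (k : ℕ)
    -- a change of `Iᵏ` in expectation occurs at iteration `k`
    (hchg : 0 < (1 / N : ℝ) * ∑ i : Fin N,
      (((IsetOf blk lam (rcdStep blk T i (xs k)) \ IsetOf blk lam (xs k)).ncard : ℝ) +
        ((IsetOf blk lam (xs k) \ IsetOf blk lam (rcdStep blk T i (xs k))).ncard : ℝ)))
    (δ : ℝ)
    (hδ : δ = (1 / N : ℝ) * sInf
      ({t : ℝ | ∃ i, 0 < lam i ∧ t = μ i * lam i / M i} ∪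
       {t : ℝ | ∃ j, x0 j ≠ 0 ∧ t = μ (blk j) / 2 * (x0 j) ^ 2})) :
    0 < δ ∧
      δ ≤ (1 / N : ℝ) * ∑ i : Fin N, μ i / 2 * ‖T i (xs k) - blkProj blk i (xs k)‖ ^ 2 := by
  obtain ⟨i₀, hi₀⟩ := hlam_pos
  have hN : 0 < N := i₀.pos
  have hNinv : (0 : ℝ) < 1 / N := by positivity
  have hMpos : ∀ i, 0 < M i := fun i => (hL i).trans (hu.M_gt_L i)
  set S : Set ℝ := {t : ℝ | ∃ i, 0 < lam i ∧ t = μ i * lam i / M i} ∪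
       {t : ℝ | ∃ j, x0 j ≠ 0 ∧ t = μ (blk j) / 2 * (x0 j) ^ 2} with hSdef
  have hSne : S.Nonempty := ⟨μ i₀ * lam i₀ / M i₀, Or.inl ⟨i₀, hi₀, rfl⟩⟩
  have hSfin : S.Finite := by
    apply Set.Finite.union
    · apply (Set.finite_range (fun i : Fin N => μ i * lam i / M i)).subset
      rintro t ⟨i, _, rfl⟩; exact ⟨i, rfl⟩
    · apply (Set.finite_range (fun j : Fin n => μ (blk j) / 2 * (x0 j) ^ 2)).subset
      rintro t ⟨j, _, rfl⟩; exact ⟨j, rfl⟩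
  have hSpos : ∀ t ∈ S, 0 < t := by
    rintro t (⟨i, hli, rfl⟩ | ⟨j, hj, rfl⟩)
    · exact div_pos (mul_pos (hu.mu_pos i) hli) (hMpos i)
    · have := hu.mu_pos (blk j)
      positivity
  set c : ℝ := sInf S with hc
  have hcpos : 0 < c := hSpos _ (hSne.csInf_mem hSfin)
  have hcle : ∀ t ∈ S, c ≤ t := fun t ht => csInf_le hSfin.bddBelow ht
  -- key lemma A consequence
  have keyA : ∀ (i : Fin N) (x : EuclideanSpace ℝ (Fin n))
      (j : {j : Fin n // blk j = i}), T i x j ≠ 0 →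
      μ i * lam i / M i ≤ μ i / 2 * (T i x j) ^ 2 := by
    intro i x j hj
    have hA : lam i ≤ M i / 2 * (T i x j) ^ 2 :=
      lemA (lam i) (M i) (hMpos i) (fun v => u i v x) (fun v => gu i v x)
        (fun v => hu.hasGradient i x v) (fun v w => hu.lipschitz_grad i x v w)
        (T i x) (fun z => hT i x z) j hj
    rw [div_le_iff₀ (hMpos i)]
    have hμ := hu.mu_pos i
    nlinarith [hMpos i]
  -- applying one step
  have happ : ∀ (i : Fin N) (x : EuclideanSpace ℝ (Fin n)) (j : Fin n),
      rcdStep blk T i x j =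
        if h : blk j = i then T i x ⟨j, h⟩ else x j := by
    intro i x j
    show (x + blkEmbed blk i (T i x - blkProj blk i x)) j = _
    rw [PiLp.add_apply]
    unfold blkEmbed
    show x j + (if h : blk j = i then (T i x - blkProj blk i x) ⟨j, h⟩ else 0) = _
    split
    next h =>
      rw [PiLp.sub_apply]
      show x j + (T i x ⟨j, h⟩ - x j) = _
      ring
    next => ring
  -- the invariant
  have inv : ∀ (m : ℕ) (j : Fin n), 0 < lam (blk j) → xs m j ≠ 0 →
      c ≤ μ (blk j) / 2 * (xs m j) ^ 2 := by
    intro m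
    induction m with
    | zero =>
      intro j hl hnz
      rw [hxs0] at hnz ⊢
      exact hcle _ (Or.inr ⟨j, hnz, rfl⟩)
    | succ m ih =>
      intro j hl hnz
      rw [hxs m] at hnz ⊢
      rw [happ] at hnz ⊢
      by_cases h : blk j = idx m
      · rw [dif_pos h] at hnz ⊢
        have := keyA (idx m) (xs m) ⟨j, h⟩ hnz
        have h2 := hcle (μ (idx m) * lam (idx m) / M (idx m))
          (Or.inl ⟨idx m, h ▸ hl, rfl⟩)
        calc c ≤ μ (idx m) * lam (idx m) / M (idx m) := h2
          _ ≤ μ (idx m) / 2 * (T (idx m) (xs m) ⟨j, h⟩) ^ 2 := this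
          _ = μ (blk j) / 2 * (T (idx m) (xs m) ⟨j, h⟩) ^ 2 := by rw [h]
      · rw [dif_neg h] at hnz ⊢
        exact ih j hl hnz
  -- component-squared bounded by norm squared
  have compsq : ∀ (i : Fin N) (v : EuclideanSpace ℝ {j : Fin n // blk j = i})
      (l : {j : Fin n // blk j = i}), (v l) ^ 2 ≤ ‖v‖ ^ 2 := by
    intro i v l
    have hnorm : ‖v‖ ^ 2 = ∑ l', (v l') ^ 2 := by
      rw [EuclideanSpace.norm_eq, Real.sq_sqrt (by positivity)]
      exact Finset.sum_congr rfl fun l' _ => by rw [Real.norm_eq_abs, sq_abs]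
    rw [hnorm]
    exact Finset.single_le_sum (fun l' _ => sq_nonneg (v l')) (Finset.mem_univ l)
  -- find the changed block
  have hsum_pos : 0 < ∑ i : Fin N,
      (((IsetOf blk lam (rcdStep blk T i (xs k)) \ IsetOf blk lam (xs k)).ncard : ℝ) +
        ((IsetOf blk lam (xs k) \ IsetOf blk lam (rcdStep blk T i (xs k))).ncard : ℝ)) := by
    by_contra hle
    push_neg at hle
    have := mul_nonpos_of_nonneg_of_nonpos (le_of_lt hNinv) hle
    linarith
  have hterm : ∃ i : Fin N,
      0 < (((IsetOf blk lam (rcdStep blk T i (xs k)) \ IsetOf blk lam (xs k)).ncard : ℝ) +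
        ((IsetOf blk lam (xs k) \ IsetOf blk lam (rcdStep blk T i (xs k))).ncard : ℝ)) := by
    by_contra hno
    push_neg at hno
    have : ∑ i : Fin N,
      (((IsetOf blk lam (rcdStep blk T i (xs k)) \ IsetOf blk lam (xs k)).ncard : ℝ) +
        ((IsetOf blk lam (xs k) \ IsetOf blk lam (rcdStep blk T i (xs k))).ncard : ℝ)) ≤ 0 :=
      Finset.sum_nonpos fun i _ => hno i
    linarith
  obtain ⟨i, hi⟩ := hterm
  -- in either case, c ≤ μ i / 2 * ‖T i (xs k) - blkProj blk i (xs k)‖ ^ 2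
  have hmain : c ≤ μ i / 2 * ‖T i (xs k) - blkProj blk i (xs k)‖ ^ 2 := by
    have hdiff : (IsetOf blk lam (rcdStep blk T i (xs k)) \ IsetOf blk lam (xs k)).Nonempty ∨
        (IsetOf blk lam (xs k) \ IsetOf blk lam (rcdStep blk T i (xs k))).Nonempty := by
      rcases lt_or_ge 0 ((IsetOf blk lam (rcdStep blk T i (xs k)) \
          IsetOf blk lam (xs k)).ncard : ℝ) with h | h
      · left
        exact Set.nonempty_of_ncard_ne_zero (by exact_mod_cast h.ne')
      · right
        apply Set.nonempty_of_ncard_ne_zero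
        have h2 : 0 < ((IsetOf blk lam (xs k) \
            IsetOf blk lam (rcdStep blk T i (xs k))).ncard : ℝ) := by linarith
        exact_mod_cast h2.ne'
    rcases hdiff with ⟨j, hjn, hjo⟩ | ⟨j, hjo, hjn⟩
    · -- j enters I : xs k j = 0, lam (blk j) > 0, new value ≠ 0
      simp only [IsetOf, Set.mem_setOf_eq] at hjn hjo
      push_neg at hjo
      obtain ⟨hx0, hlne⟩ := hjo
      have hlpos : 0 < lam (blk j) := lt_of_le_of_ne (hlam _) (Ne.symm hlne)
      have hnew : rcdStep blk T i (xs k) j ≠ 0 := by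
        rcases hjn with h | h
        · exact h
        · exact absurd h hlne
      rw [happ] at hnew
      by_cases h : blk j = i
      · rw [dif_pos h] at hnew
        have h1 := keyA i (xs k) ⟨j, h⟩ hnew
        have h2 := hcle (μ i * lam i / M i) (Or.inl ⟨i, h ▸ hlpos, rfl⟩)
        have h3 : (T i (xs k) ⟨j, h⟩) ^ 2 =
            ((T i (xs k) - blkProj blk i (xs k)) ⟨j, h⟩) ^ 2 := by
          rw [PiLp.sub_apply]
          show _ = (T i (xs k) ⟨j, h⟩ - xs k j) ^ 2
          rw [hx0, sub_zero]
        have h4 := compsq i (T i (xs k) - blkProj blk i (xs k)) ⟨j, h⟩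
        have hμ := hu.mu_pos i
        calc c ≤ μ i * lam i / M i := h2
          _ ≤ μ i / 2 * (T i (xs k) ⟨j, h⟩) ^ 2 := h1
          _ = μ i / 2 * ((T i (xs k) - blkProj blk i (xs k)) ⟨j, h⟩) ^ 2 := by rw [h3]
          _ ≤ μ i / 2 * ‖T i (xs k) - blkProj blk i (xs k)‖ ^ 2 := by nlinarith
      · rw [dif_neg h] at hnew
        exact absurd hx0 hnew
    · -- j leaves I : xs k j ≠ 0, lam (blk j) > 0, new value = 0
      simp only [IsetOf, Set.mem_setOf_eq] at hjn hjo
      push_neg at hjn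
      obtain ⟨hnew0, hlne⟩ := hjn
      have hlpos : 0 < lam (blk j) := lt_of_le_of_ne (hlam _) (Ne.symm hlne)
      have hxne : xs k j ≠ 0 := by
        rcases hjo with h | h
        · exact h
        · exact absurd h hlne
      rw [happ] at hnew0
      by_cases h : blk j = i
      · rw [dif_pos h] at hnew0
        have h1 := inv k j hlpos hxne
        have h3 : (xs k j) ^ 2 =
            ((T i (xs k) - blkProj blk i (xs k)) ⟨j, h⟩) ^ 2 := by
          rw [PiLp.sub_apply]
          show _ = (T i (xs k) ⟨j, h⟩ - xs k j) ^ 2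
          rw [hnew0, zero_sub, neg_sq]
        have h4 := compsq i (T i (xs k) - blkProj blk i (xs k)) ⟨j, h⟩
        have hμ := hu.mu_pos i
        calc c ≤ μ (blk j) / 2 * (xs k j) ^ 2 := h1
          _ = μ i / 2 * ((T i (xs k) - blkProj blk i (xs k)) ⟨j, h⟩) ^ 2 := by rw [← h3, h]
          _ ≤ μ i / 2 * ‖T i (xs k) - blkProj blk i (xs k)‖ ^ 2 := by nlinarith
      · rw [dif_neg h] at hnew0
        exact absurd hnew0 hxne
  have hδc : δ = (1 / N : ℝ) * c := hδ
  constructor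
  · rw [hδc]; exact mul_pos hNinv hcpos
  · rw [hδc]
    apply mul_le_mul_of_nonneg_left _ (le_of_lt hNinv)
    calc c ≤ μ i / 2 * ‖T i (xs k) - blkProj blk i (xs k)‖ ^ 2 := hmain
      _ ≤ ∑ i' : Fin N, μ i' / 2 * ‖T i' (xs k) - blkProj blk i' (xs k)‖ ^ 2 := by
        apply Finset.single_le_sum (f := fun i' =>
          μ i' / 2 * ‖T i' (xs k) - blkProj blk i' (xs k)‖ ^ 2)
          (fun i' _ => by have := hu.mu_pos i'; positivity) (Finset.mem_univ i)
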